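/- (Theorem 3.1, part C.) Let ξ be a nonnegative random variable whose exponential tail function G(x) = −ln P(ξ > x) is super convex, i.e. convex and lower semicontinuous on [0, ∞). Let φ : [1, ∞) → [0, ∞) satisfy: (i) E exp(λξ) ≥ exp(φ(λ)) for all λ ≥ 1; (ii) φ belongs to the class W, i.e. there is c₁ ∈ (0, 1] with φ₁(λ) ≥ φ(c₁λ) for all λ ≥ 1, where φ₁(λ) = ln( (e^{φ(λ)} − 1)/λ ); (iii) there exists ε ∈ (0, 1) with K(ε) := ∫₀^∞ e^{−εG(x)} dx < ∞; (iv) φ*(x) := sup_{λ ≥ 1} (λx − φ(λ)) is finite for all x ≥ 1 and φ*(x)/x → ∞ as x → ∞. Then there exist a constant c > 0 and x₁ ≥ 1 such that for all x ≥ x₁, G(x) ≤ φ*(c·x), i.e. P(ξ > x) ≥ exp( −φ*(c·x) ). -/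

import Mathlib

open MeasureTheory ProbabilityTheory Real Filter
open scoped ENNReal

lemma aux_integral_exp (L a : ℝ) :
    ∫ t in (0:ℝ)..a, L * Real.exp (L * t) = Real.exp (L * a) - 1 := by
  have hderiv : ∀ t ∈ Set.uIcc (0:ℝ) a,
      HasDerivAt (fun u => Real.exp (L * u)) (L * Real.exp (L * t)) t := by
    intro t _
    have h := (Real.hasDerivAt_exp (L * t)).comp t ((hasDerivAt_id t).const_mul L)
    simpa [mul_comm, Function.comp_def] using h
  have hint : IntervalIntegrable (fun t => L * Real.exp (L * t)) volume 0 a :=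
    (continuous_const.mul (Real.continuous_exp.comp
      (continuous_const.mul continuous_id))).intervalIntegrable _ _
  rw [intervalIntegral.integral_eq_sub_of_hasDerivAt hderiv hint]
  simp

lemma aux_layercake {Ω : Type*} [MeasureSpace Ω] [IsProbabilityMeasure (ℙ : Measure Ω)]
    (ξ : Ω → ℝ) (hξ : Measurable ξ) (hξ_nonneg : ∀ ω, 0 ≤ ξ ω) (L : ℝ) (hL : 0 < L) :
    ∫⁻ ω, ENNReal.ofReal (Real.exp (L * ξ ω) - 1) ∂ℙ
      = ∫⁻ t in Set.Ioi 0, (ℙ : Measure Ω) {ω | t < ξ ω} * ENNReal.ofReal (L * Real.exp (L * t)) := by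
  have key := lintegral_comp_eq_lintegral_meas_lt_mul (ℙ : Measure Ω)
    (f := ξ) (g := fun t => L * Real.exp (L * t))
    (Filter.Eventually.of_forall hξ_nonneg) hξ.aemeasurable
    (fun t _ => (continuous_const.mul (Real.continuous_exp.comp
      (continuous_const.mul continuous_id))).intervalIntegrable _ _)
    (Filter.Eventually.of_forall fun t => by positivity)
  simp_rw [aux_integral_exp L] at key
  exact key

set_option maxHeartbeats 1000000 in
/-- **Theorem 3.1, part C.**  Let `ξ ≥ 0` have a super convex exponential tail function `G`
(`P(ξ > x) = exp (−G x)`, `G` convex and lower semicontinuous on `[0,∞)`), and let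
`φ : [1,∞) → [0,∞)` satisfy: (i) `E exp (λ ξ) ≥ exp (φ λ)` for all `λ ≥ 1`;
(ii) `φ ∈ W`, i.e. `φ₁(λ) = ln ((e^{φ(λ)} − 1)/λ) ≥ φ(c₁ λ)` for some `c₁ ∈ (0,1]`;
(iii) `K(ε) = ∫₀^∞ e^{−ε G x} dx < ∞` for some `ε ∈ (0,1)`;
(iv) `φ*(x) = sup_{λ ≥ 1} (λ x − φ λ)` is finite for `x ≥ 1` and `φ*(x)/x → ∞`.
Then there are `c > 0` and `x₁ ≥ 1` with `G x ≤ φ*(c x)`, i.e.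
`P(ξ > x) ≥ exp (−φ*(c x))`, for all `x ≥ x₁`. -/
theorem tail_lower_bound_C {Ω : Type*} [MeasureSpace Ω]
    [IsProbabilityMeasure (ℙ : Measure Ω)]
    (ξ : Ω → ℝ) (hξ : Measurable ξ) (hξ_nonneg : ∀ ω, 0 ≤ ξ ω)
    (G : ℝ → ℝ) (hG : ∀ x > (0 : ℝ), (ℙ {ω | x < ξ ω}).toReal = Real.exp (-G x))
    (hG_convex : ConvexOn ℝ (Set.Ici 0) G)
    (hG_lsc : LowerSemicontinuousOn G (Set.Ici 0))
    (φ : ℝ → ℝ) (hφ_nonneg : ∀ l ≥ (1 : ℝ), 0 ≤ φ l)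
    (hmgf : ∀ l ≥ (1 : ℝ),
      ENNReal.ofReal (Real.exp (φ l)) ≤ ∫⁻ ω, ENNReal.ofReal (Real.exp (l * ξ ω)) ∂ℙ)
    (c₁ : ℝ) (hc₁ : c₁ ∈ Set.Ioc (0 : ℝ) 1)
    (hW : ∀ l ≥ (1 : ℝ), φ (c₁ * l) ≤ Real.log ((Real.exp (φ l) - 1) / l))
    (ε : ℝ) (hε : ε ∈ Set.Ioo (0 : ℝ) 1)
    (hKfin : IntegrableOn (fun x => Real.exp (-ε * G x)) (Set.Ioi 0))
    (φstar : ℝ → ℝ)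
    (hφstar : ∀ x : ℝ, φstar x = sSup {y : ℝ | ∃ l : ℝ, 1 ≤ l ∧ y = l * x - φ l})
    (hφstar_fin : ∀ x ≥ (1 : ℝ), BddAbove {y : ℝ | ∃ l : ℝ, 1 ≤ l ∧ y = l * x - φ l})
    (hφstar_growth : Tendsto (fun x => φstar x / x) atTop atTop) :
    ∃ c : ℝ, 0 < c ∧ ∃ x₁ : ℝ, 1 ≤ x₁ ∧ ∀ x ≥ x₁,
      G x ≤ φstar (c * x) ∧
      Real.exp (-(φstar (c * x))) ≤ (ℙ {ω | x < ξ ω}).toReal := by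
  obtain ⟨hc₁0, hc₁1⟩ := hc₁
  obtain ⟨hε0, hε1⟩ := hε
  obtain ⟨δ, hδdef⟩ : ∃ δ : ℝ, δ = 1 - ε := ⟨_, rfl⟩
  have hδ0 : 0 < δ := by rw [hδdef]; linarith
  obtain ⟨K, hKdef⟩ : ∃ K : ℝ, K = ∫ t in Set.Ioi (0:ℝ), Real.exp (-ε * G t) := ⟨_, rfl⟩
  -- monotonicity of G on (0,∞)
  have hGmono : ∀ ⦃a b : ℝ⦄, 0 < a → a ≤ b → G a ≤ G b := by
    intro a b ha hab
    have hm : (ℙ : Measure Ω) {ω | b < ξ ω} ≤ (ℙ : Measure Ω) {ω | a < ξ ω} :=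
      measure_mono (fun ω hω => lt_of_le_of_lt hab hω)
    have h2 := ENNReal.toReal_mono (measure_ne_top _ _) hm
    rw [hG a ha, hG b (lt_of_lt_of_le ha hab)] at h2
    have := Real.exp_le_exp.mp h2
    linarith
  -- positivity of K
  have hK_pos : 0 < K := by
    rw [hKdef]
    refine (setIntegral_pos_iff_support_of_nonneg_ae
      (Filter.Eventually.of_forall fun t => (Real.exp_pos _).le) hKfin).2 ?_
    have hsupp : Function.support (fun x : ℝ => Real.exp (-ε * G x)) = Set.univ := by
      ext t; simp [Function.mem_support, Real.exp_ne_zero]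
    rw [hsupp, Set.univ_inter, Real.volume_Ioi]
    exact ENNReal.zero_lt_top
  have hK_lint : ∫⁻ t in Set.Ioi (0:ℝ), ENNReal.ofReal (Real.exp (-ε * G t))
      = ENNReal.ofReal K := by
    rw [hKdef]
    exact (ofReal_integral_eq_lintegral_ofReal hKfin
      (Filter.Eventually.of_forall fun t => (Real.exp_pos _).le)).symm
  -- elementary facts about φstar
  have helem : ∀ z l : ℝ, 1 ≤ z → 1 ≤ l → l * z - φ l ≤ φstar z := by
    intro z l hz hl
    rw [hφstar]
    exact le_csSup (hφstar_fin z hz) ⟨l, hl, rfl⟩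
  have hφ_lb : ∀ l : ℝ, 1 ≤ l → l - φstar 1 ≤ φ l := by
    intro l hl
    have h := helem 1 l le_rfl hl
    linarith [h, mul_one l]
  have hφstar_mono : ∀ a b : ℝ, 1 ≤ a → a ≤ b → φstar a ≤ φstar b := by
    intro a b ha hab
    rw [hφstar a]
    refine csSup_le ⟨1 * a - φ 1, ⟨1, le_rfl, rfl⟩⟩ ?_
    rintro w ⟨l, hl, rfl⟩
    have h1 : l * b - φ l ≤ φstar b := helem b l (ha.trans hab) hl
    have h2 : l * a ≤ l * b := mul_le_mul_of_nonneg_left hab (by linarith)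
    linarith
  obtain ⟨n, hndef⟩ : ∃ n : ℝ, n = 1/δ + 1 := ⟨_, rfl⟩
  have hδinv : 0 < 1/δ := by positivity
  have hn1 : 1 ≤ n := by rw [hndef]; linarith
  have hn0 : 0 < n := by linarith
  -- amplification by convexity of φstar
  have hamp : ∀ y : ℝ, 1 ≤ y → n * φstar y - (n-1) * φstar 1 ≤ φstar (n * y) := by
    intro y hy
    have hz1 : 1 ≤ n * y - (n - 1) := by
      nlinarith [mul_nonneg (by linarith : (0:ℝ) ≤ n) (by linarith : (0:ℝ) ≤ y - 1)]
    have hkey : φstar y ≤ (φstar (n*y - (n-1)) + (n-1) * φstar 1) / n := by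
      rw [hφstar y]
      refine csSup_le ⟨1 * y - φ 1, ⟨1, le_rfl, rfl⟩⟩ ?_
      rintro w ⟨l, hl, rfl⟩
      have h1 : l * (n*y - (n-1)) - φ l ≤ φstar (n*y-(n-1)) := helem _ l hz1 hl
      have h2 : l * 1 - φ l ≤ φstar 1 := helem 1 l le_rfl hl
      have h2' : (n-1) * (l * 1 - φ l) ≤ (n-1) * φstar 1 :=
        mul_le_mul_of_nonneg_left h2 (by linarith)
      rw [le_div_iff₀ hn0]
      have e : (l*y - φ l) * n = (l * (n*y-(n-1)) - φ l) + (n-1) * (l * 1 - φ l) := by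
        ring
      linarith
    have hmono := hφstar_mono (n*y - (n-1)) (n*y) hz1 (by linarith)
    rw [le_div_iff₀ hn0] at hkey
    linarith
  obtain ⟨Lam, hLamdef⟩ : ∃ Lam : ℝ, Lam = max (1/c₁) (φstar 1 + 1) := ⟨_, rfl⟩
  have hLam_c₁ : 1/c₁ ≤ Lam := hLamdef ▸ le_max_left _ _
  have hLam_φ : φstar 1 + 1 ≤ Lam := hLamdef ▸ le_max_right _ _
  have hc₁inv : 1 ≤ 1/c₁ := by rw [le_div_iff₀ hc₁0]; linarith
  have hLam1 : 1 ≤ Lam := hc₁inv.trans hLam_c₁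
  obtain ⟨c, hcdef⟩ : ∃ c : ℝ, c = 3 * n / (2 * c₁) := ⟨_, rfl⟩
  have hc_pos : 0 < c := by rw [hcdef]; positivity
  have hc_one : 1 ≤ c := by
    rw [hcdef, le_div_iff₀ (by positivity)]; linarith
  obtain ⟨C₀, hC₀def⟩ : ∃ C₀ : ℝ, C₀ = max 0 (Real.log K / δ + (n-1) * φstar 1) := ⟨_, rfl⟩
  have hC₀0 : 0 ≤ C₀ := hC₀def ▸ le_max_left _ _
  obtain ⟨M, hMdef⟩ : ∃ M : ℝ, M = Lam / δ + |G 1| + 1 := ⟨_, rfl⟩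
  have hM0 : 0 ≤ M := by
    have h1 : 0 < Lam / δ := div_pos (by linarith) hδ0
    have h2 := abs_nonneg (G 1)
    rw [hMdef]; linarith
  obtain ⟨t₀, ht₀⟩ : ∃ t₀ : ℝ, ∀ t ≥ t₀, max M C₀ ≤ φstar t / t := by
    have h := hφstar_growth.eventually_ge_atTop (max M C₀)
    rw [Filter.eventually_atTop] at h
    exact h
  have hgrow : ∀ t : ℝ, 1 ≤ t → t₀ ≤ t → max M C₀ * t ≤ φstar t := by
    intro t h1 h2
    have h3 := ht₀ t h2
    rw [le_div_iff₀ (by linarith : (0:ℝ) < t)] at h3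
    exact h3
  refine ⟨c, hc_pos, max (max t₀ 1) 3, le_trans (by norm_num) (le_max_right _ _), ?_⟩
  intro x hx
  have hx3 : (3:ℝ) ≤ x := le_trans (le_max_right _ _) hx
  have hx1 : (1:ℝ) ≤ x := by linarith
  have hxt₀ : t₀ ≤ x := le_trans (le_trans (le_max_left _ _) (le_max_left _ _)) hx
  have hx0 : (0:ℝ) < x := by linarith
  have hx20 : (0:ℝ) < x/2 := by linarith
  have hx21 : (1:ℝ) < x/2 := by linarith
  have hx2x : x/2 < x := by linarith
  have hcx_x : x ≤ c * x := by
    calc x = 1 * x := (one_mul x).symm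
      _ ≤ c * x := mul_le_mul_of_nonneg_right hc_one hx0.le
  -- main claim
  have hmain : G x ≤ φstar (c * x) := by
    obtain ⟨s, hsdef⟩ : ∃ s : ℝ, s = (G x - G (x/2)) / (x/2) := ⟨_, rfl⟩
    have hs_mul : s * (x/2) = G x - G (x/2) := by
      rw [hsdef]; exact div_mul_cancel₀ _ (ne_of_gt hx20)
    have hs0 : 0 ≤ s := by
      rw [hsdef]
      exact div_nonneg (by linarith [hGmono hx20 (le_of_lt hx2x)]) (le_of_lt hx20)
    by_cases hcase : s ≤ Lam / δ
    · -- bounded-slope case: linear bound on G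
      have hslope := hG_convex.slope_mono_adjacent (Set.mem_Ici.2 zero_le_one)
        (Set.mem_Ici.2 hx0.le) hx21 hx2x
      rw [show x - x/2 = x/2 by ring, ← hsdef] at hslope
      have h1 : G (x/2) - G 1 ≤ s * (x/2 - 1) := by
        have := (div_le_iff₀ (by linarith : (0:ℝ) < x/2 - 1)).1 hslope
        linarith
      have hGx_le : G x ≤ G 1 + Lam/δ * x := by
        have hsx : s * x ≤ Lam/δ * x := mul_le_mul_of_nonneg_right hcase hx0.le
        have e1 : s * (x/2 - 1) + s * (x/2) = s * x - s := by ring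
        linarith [h1, hs_mul, hsx, hs0, e1]
      have hφcx : M * x ≤ φstar (c * x) := by
        have h2 := hgrow (c*x) (hx1.trans hcx_x) (hxt₀.trans hcx_x)
        have h3 : M * x ≤ max M C₀ * (c * x) := by
          calc M * x ≤ max M C₀ * x :=
                mul_le_mul_of_nonneg_right (le_max_left _ _) hx0.le
            _ ≤ max M C₀ * (c * x) :=
                mul_le_mul_of_nonneg_left hcx_x (le_trans hM0 (le_max_left _ _))
        linarith
      have h4 : G 1 + Lam/δ * x ≤ M * x := by
        have ha1 := le_abs_self (G 1)
        have ha2 := abs_nonneg (G 1)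
        have ha3 : |G 1| * 1 ≤ |G 1| * x := mul_le_mul_of_nonneg_left hx1 ha2
        have e : M * x = Lam/δ * x + |G 1| * x + x := by rw [hMdef]; ring
        linarith
      linarith
    · -- large-slope case: the main argument
      push_neg at hcase
      obtain ⟨L, hLdef⟩ : ∃ L : ℝ, L = δ * s := ⟨_, rfl⟩
      have hLamL : Lam < L := by
        rw [hLdef]
        have := (div_lt_iff₀ hδ0).1 hcase
        linarith [mul_comm δ s]
      have hL1 : (1:ℝ) ≤ L := by linarith
      have hL0 : (0:ℝ) < L := by linarith
      have hc₁L : 1 ≤ c₁ * L := by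
        have h1 : 1/c₁ ≤ L := le_trans hLam_c₁ hLamL.le
        rw [div_le_iff₀ hc₁0] at h1
        linarith [mul_comm c₁ L]
      have hφL : 1 ≤ φ L := by
        have := hφ_lb L hL1
        linarith
      -- support-line estimate
      have hsupp : ∀ t : ℝ, 0 < t → s * t - G t ≤ (3/2) * s * x - G x := by
        intro t ht
        have hsx2 : 0 ≤ s * (x/2) := mul_nonneg hs0 hx20.le
        have e2 : (3/2) * s * x = 3 * (s * (x/2)) := by ring
        rcases le_or_gt t (x/2) with h | h
        · rcases eq_or_lt_of_le h with heq | hlt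
          · rw [heq]
            linarith [hs_mul, hsx2, e2]
          · have hsl := hG_convex.slope_mono_adjacent (Set.mem_Ici.2 ht.le)
              (Set.mem_Ici.2 hx0.le) hlt hx2x
            rw [show x - x/2 = x/2 by ring, ← hsdef] at hsl
            have h1 : G (x/2) - G t ≤ s * (x/2 - t) :=
              (div_le_iff₀ (by linarith : (0:ℝ) < x/2 - t)).1 hsl
            have e1 : s * (x/2 - t) = s * (x/2) - s * t := by ring
            linarith [h1, hs_mul, hsx2, e1, e2]
        · rcases le_or_gt t x with h2 | h2
          · have hGt : G (x/2) ≤ G t := hGmono hx20 h.le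
            have hst : s * t ≤ s * x := mul_le_mul_of_nonneg_left h2 hs0
            have e1 : s * (x/2) = (3/2) * s * x - s * x := by ring
            linarith [hGt, hst, hs_mul, e1]
          · have hsl := hG_convex.slope_mono_adjacent (Set.mem_Ici.2 hx20.le)
              (Set.mem_Ici.2 (by linarith : (0:ℝ) ≤ t)) hx2x h2
            rw [show x - x/2 = x/2 by ring, ← hsdef] at hsl
            have h1 : s * (t - x) ≤ G t - G x :=
              (le_div_iff₀ (by linarith : (0:ℝ) < t - x)).1 hsl
            have e1 : s * (t - x) = s * t - s * x := by ring
            linarith [h1, e1, mul_nonneg hs0 hx0.le]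
      obtain ⟨S, hSdef⟩ : ∃ S : ℝ, S = (3/2) * L * x - δ * G x := ⟨_, rfl⟩
      have hpt : ∀ t : ℝ, 0 < t → L * t - G t ≤ S - ε * G t := by
        intro t ht
        have h1 := mul_le_mul_of_nonneg_left (hsupp t ht) hδ0.le
        rw [hSdef, hLdef, hδdef]
        rw [hδdef] at h1
        linarith [h1]
      -- the integral estimate
      have hmgfL := hmgf L hL1
      have h2 : (∫⁻ ω, ENNReal.ofReal (Real.exp (L * ξ ω)) ∂ℙ)
          ≤ 1 + ∫⁻ ω, ENNReal.ofReal (Real.exp (L * ξ ω) - 1) ∂ℙ := by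
        have hpw : (∫⁻ ω, ENNReal.ofReal (Real.exp (L * ξ ω)) ∂ℙ)
            ≤ ∫⁻ ω, ((1:ℝ≥0∞) + ENNReal.ofReal (Real.exp (L * ξ ω) - 1)) ∂ℙ := by
          refine lintegral_mono fun ω => ?_
          calc ENNReal.ofReal (Real.exp (L * ξ ω))
              = ENNReal.ofReal (1 + (Real.exp (L * ξ ω) - 1)) := by ring_nf
            _ ≤ ENNReal.ofReal 1 + ENNReal.ofReal (Real.exp (L * ξ ω) - 1) :=
                ENNReal.ofReal_add_le
            _ = 1 + ENNReal.ofReal (Real.exp (L * ξ ω) - 1) := by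
                rw [ENNReal.ofReal_one]
        rwa [lintegral_add_left measurable_const, lintegral_const, measure_univ,
          one_mul] at hpw
      have h4 := aux_layercake ξ hξ hξ_nonneg L hL0
      have h5 : (∫⁻ t in Set.Ioi (0:ℝ),
            (ℙ : Measure Ω) {ω | t < ξ ω} * ENNReal.ofReal (L * Real.exp (L * t)))
          ≤ ENNReal.ofReal (L * Real.exp S) * ENNReal.ofReal K := by
        have hb : ∀ᵐ t ∂(volume.restrict (Set.Ioi (0:ℝ))),
            (ℙ : Measure Ω) {ω | t < ξ ω} * ENNReal.ofReal (L * Real.exp (L * t))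
              ≤ ENNReal.ofReal (L * Real.exp S) * ENNReal.ofReal (Real.exp (-ε * G t)) := by
          filter_upwards [ae_restrict_mem measurableSet_Ioi] with t ht
          have hμ : (ℙ : Measure Ω) {ω | t < ξ ω} = ENNReal.ofReal (Real.exp (-G t)) := by
            rw [← hG t ht, ENNReal.ofReal_toReal (measure_ne_top _ _)]
          rw [hμ, ← ENNReal.ofReal_mul (Real.exp_pos _).le,
            ← ENNReal.ofReal_mul (by positivity)]
          apply ENNReal.ofReal_le_ofReal
          have hexp : Real.exp (-G t) * Real.exp (L * t)
              ≤ Real.exp S * Real.exp (-ε * G t) := by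
            rw [← Real.exp_add, ← Real.exp_add]
            exact Real.exp_le_exp.2 (by linarith [hpt t ht])
          calc Real.exp (-G t) * (L * Real.exp (L * t))
              = L * (Real.exp (-G t) * Real.exp (L * t)) := by ring
            _ ≤ L * (Real.exp S * Real.exp (-ε * G t)) :=
                mul_le_mul_of_nonneg_left hexp hL0.le
            _ = L * Real.exp S * Real.exp (-ε * G t) := by ring
        calc (∫⁻ t in Set.Ioi (0:ℝ),
              (ℙ : Measure Ω) {ω | t < ξ ω} * ENNReal.ofReal (L * Real.exp (L * t)))
            ≤ ∫⁻ t in Set.Ioi (0:ℝ),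
              ENNReal.ofReal (L * Real.exp S) * ENNReal.ofReal (Real.exp (-ε * G t)) :=
              lintegral_mono_ae hb
          _ = ENNReal.ofReal (L * Real.exp S)
              * ∫⁻ t in Set.Ioi (0:ℝ), ENNReal.ofReal (Real.exp (-ε * G t)) :=
              lintegral_const_mul' _ _ ENNReal.ofReal_ne_top
          _ = ENNReal.ofReal (L * Real.exp S) * ENNReal.ofReal K := by rw [hK_lint]
      have hreal : Real.exp (φ L) ≤ 1 + L * Real.exp S * K := by
        have hnn : (0:ℝ) ≤ L * Real.exp S * K :=
          mul_nonneg (mul_nonneg hL0.le (Real.exp_pos _).le) hK_pos.le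
        have hchain : ENNReal.ofReal (Real.exp (φ L))
            ≤ ENNReal.ofReal (1 + L * Real.exp S * K) := by
          calc ENNReal.ofReal (Real.exp (φ L))
              ≤ ∫⁻ ω, ENNReal.ofReal (Real.exp (L * ξ ω)) ∂ℙ := hmgfL
            _ ≤ 1 + ∫⁻ ω, ENNReal.ofReal (Real.exp (L * ξ ω) - 1) ∂ℙ := h2
            _ = 1 + ∫⁻ t in Set.Ioi (0:ℝ),
                (ℙ : Measure Ω) {ω | t < ξ ω} * ENNReal.ofReal (L * Real.exp (L * t)) := by
                rw [h4]
            _ ≤ 1 + ENNReal.ofReal (L * Real.exp S) * ENNReal.ofReal K :=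
                add_le_add le_rfl h5
            _ = ENNReal.ofReal (1 + L * Real.exp S * K) := by
                rw [← ENNReal.ofReal_mul (mul_nonneg hL0.le (Real.exp_pos _).le),
                  ← ENNReal.ofReal_one,
                  ← ENNReal.ofReal_add (by norm_num) hnn]
        exact (ENNReal.ofReal_le_ofReal_iff (by linarith)).1 hchain
      -- logarithmic step
      have hlogstep : φ (c₁ * L) ≤ S + Real.log K := by
        have h1 := hW L hL1
        have hexpgt : 2 ≤ Real.exp (φ L) := by
          have := Real.add_one_le_exp (φ L); linarith
        have hargpos : 0 < (Real.exp (φ L) - 1) / L := div_pos (by linarith) hL0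
        have harg2 : (Real.exp (φ L) - 1) / L ≤ Real.exp S * K := by
          rw [div_le_iff₀ hL0]
          have e : Real.exp S * K * L = L * Real.exp S * K := by ring
          linarith [hreal, e]
        have hlog := Real.log_le_log hargpos harg2
        calc φ (c₁ * L) ≤ Real.log ((Real.exp (φ L) - 1) / L) := h1
          _ ≤ Real.log (Real.exp S * K) := hlog
          _ = S + Real.log K := by
              rw [Real.log_mul (Real.exp_ne_zero _) (ne_of_gt hK_pos), Real.log_exp]
      -- conjugate step
      obtain ⟨y, hydef⟩ : ∃ y : ℝ, y = 3 * x / (2 * c₁) := ⟨_, rfl⟩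
      have hyx : x ≤ y := by
        rw [hydef, le_div_iff₀ (by positivity)]
        have : c₁ * x ≤ 1 * x := mul_le_mul_of_nonneg_right hc₁1 hx0.le
        linarith
      have hy1 : 1 ≤ y := hx1.trans hyx
      have helemy : c₁ * L * y - φ (c₁ * L) ≤ φstar y := helem y (c₁ * L) hy1 hc₁L
      have hkey : c₁ * L * y = (3/2) * L * x := by
        rw [hydef]; field_simp
      have hGx_bound : δ * G x ≤ φstar y + Real.log K := by
        rw [hkey] at helemy
        rw [hSdef] at hlogstep
        linarith
      -- growth step
      have hyt₀ : t₀ ≤ y := hxt₀.trans hyx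
      have hφy := hgrow y hy1 hyt₀
      have hC₀y : C₀ ≤ φstar y := by
        have h1 : C₀ ≤ max M C₀ := le_max_right _ _
        have h2 : 0 ≤ max M C₀ := le_trans hM0 (le_max_left _ _)
        have h3 : max M C₀ * 1 ≤ max M C₀ * y := mul_le_mul_of_nonneg_left hy1 h2
        linarith
      have hφy0 : 0 ≤ φstar y := hC₀0.trans hC₀y
      have hfinal : (φstar y + Real.log K) / δ ≤ n * φstar y - (n-1) * φstar 1 := by
        have hC₀ge : Real.log K / δ + (n-1) * φstar 1 ≤ C₀ := hC₀def ▸ le_max_right _ _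
        have h1 : (φstar y + Real.log K) / δ = (1/δ) * φstar y + Real.log K / δ := by
          ring
        have h2 : n * φstar y = (1/δ) * φstar y + φstar y := by
          rw [hndef]; ring
        linarith
      have hampy := hamp y hy1
      have hny : n * y = c * x := by
        rw [hydef, hcdef]; field_simp
      have hGδ : G x ≤ (φstar y + Real.log K) / δ := by
        rw [le_div_iff₀ hδ0]
        linarith [mul_comm (G x) δ, hGx_bound]
      calc G x ≤ (φstar y + Real.log K) / δ := hGδ
        _ ≤ n * φstar y - (n-1) * φstar 1 := hfinal
        _ ≤ φstar (n * y) := hampy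
        _ = φstar (c * x) := by rw [hny]
  refine ⟨hmain, ?_⟩
  rw [hG x hx0]
  exact Real.exp_le_exp.2 (by linarith)
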